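/- Let (H,{F_A},{F_G}) be a GR(1) game with singleton winning conditions, Z^∞ = ⟦φ₄⟧, and f¹ the memoryless strategy extracted from the rank. Then for all q ∈ Z^∞, L_q(H,f¹) ⊆ L̄_q(H,F_A) ∪ L_q(H,F_G); that is, every play from q compliant with f¹ that visits F_A infinitely often also visits F_G infinitely often. -/

import Mathlib

namespace GR1

/-- A two-player game graph `H = ⟨Q⁰, Q¹, δ⁰, δ¹, q₀⟩`.  `env` is the set `Q⁰` of
environment states, `sys` the set `Q¹` of system states, and `delta` combines the
transition functions `δ⁰` and `δ¹`. -/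
structure GameGraph (Q : Type*) where
  env : Set Q
  sys : Set Q
  delta : Q → Set Q
  disjoint_env_sys : Disjoint env sys
  union_env_sys : env ∪ sys = Set.univ
  delta_env : ∀ q ∈ env, delta q ⊆ sys
  delta_sys : ∀ q ∈ sys, delta q ⊆ env
  delta_nonempty : ∀ q, (delta q).Nonempty
  init : Q
  init_env : init ∈ env

namespace GameGraph

/-- The existential predecessor operator `Pre∃`. -/
def PreE {Q : Type*} (G : GameGraph Q) (P : Set Q) : Set Q :=
  {q | (G.delta q ∩ P).Nonempty}

/-- The universal predecessor operator `Pre∀`. -/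
def PreA {Q : Type*} (G : GameGraph Q) (P : Set Q) : Set Q :=
  {q | G.delta q ⊆ P}

/-- The player-0 (environment) controllable predecessor operator `Pre⁰`. -/
def Pre0 {Q : Type*} (G : GameGraph Q) (P : Set Q) : Set Q :=
  {q | q ∈ G.env ∧ (G.delta q ∩ P).Nonempty} ∪ {q | q ∈ G.sys ∧ G.delta q ⊆ P}

/-- The player-1 (system) controllable predecessor operator `Pre¹`. -/
def Pre1 {Q : Type*} (G : GameGraph Q) (P : Set Q) : Set Q :=
  {q | q ∈ G.env ∧ G.delta q ⊆ P} ∪ {q | q ∈ G.sys ∧ (G.delta q ∩ P).Nonempty}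

/-- The conditional predecessor `Precond(P,P') = Pre∃(P) ∩ Pre¹(P ∪ P')`. -/
def Precond {Q : Type*} (G : GameGraph Q) (P P' : Set Q) : Set Q :=
  G.PreE P ∩ G.Pre1 (P ∪ P')

/-- The dual conditional predecessor `Precondᶜ(P,P') = Pre∀(P) ∪ Pre⁰(P ∩ P')`. -/
def PrecondC {Q : Type*} (G : GameGraph Q) (P P' : Set Q) : Set Q :=
  G.PreA P ∪ G.Pre0 (P ∩ P')

end GameGraph

/-- Knaster–Tarski least fixed point over the powerset lattice. -/
def lfpSet {Q : Type*} (F : Set Q → Set Q) : Set Q := ⋂₀ {S | F S ⊆ S}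

/-- Knaster–Tarski greatest fixed point over the powerset lattice. -/
def gfpSet {Q : Type*} (F : Set Q → Set Q) : Set Q := ⋃₀ {S | S ⊆ F S}

/-- Knaster–Tarski least fixed point over the lattice of vectors of sets. -/
def lfpVec {Q : Type*} {n : ℕ} (F : (Fin n → Set Q) → (Fin n → Set Q)) : Fin n → Set Q :=
  fun a => ⋂ V ∈ {V : Fin n → Set Q | ∀ a', F V a' ⊆ V a'}, V a

/-- Knaster–Tarski greatest fixed point over the lattice of vectors of sets. -/
def gfpVec {Q : Type*} {n : ℕ} (F : (Fin n → Set Q) → (Fin n → Set Q)) : Fin n → Set Q :=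
  fun a => ⋃ V ∈ {V : Fin n → Set Q | ∀ a', V a' ⊆ F V a'}, V a

/-- Cyclic successor of a mode: `a⁺ = (a mod n) + 1` in 1-based counting. -/
def modeSucc {n : ℕ} (a : Fin n) : Fin n :=
  ⟨(a.val + 1) % n, Nat.mod_lt _ a.pos⟩

/-- `π` is an (infinite) play over `G` starting in the state `q`. -/
def IsPlayFrom {Q : Type*} (G : GameGraph Q) (q : Q) (π : ℕ → Q) : Prop :=
  π 0 = q ∧ ∀ k, π (k + 1) ∈ G.delta (π k)

/-- `Inf(π) ∩ F ≠ ∅` : the play `π` visits the set `F` infinitely often. -/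
def InfOft {Q : Type*} (π : ℕ → Q) (F : Set Q) : Prop := ∀ n, ∃ k, n ≤ k ∧ π k ∈ F

/-- `L_q(H,F)` : plays from `q` satisfying the Büchi condition `F`. -/
def LBuchi {Q : Type*} (G : GameGraph Q) (q : Q) (F : Set Q) : Set (ℕ → Q) :=
  {π | IsPlayFrom G q π ∧ InfOft π F}

/-- `L_q(H,𝓕)` : plays from `q` satisfying the generalized Büchi condition `𝓕`. -/
def LGenBuchi {Q ι : Type*} (G : GameGraph Q) (q : Q) (F : ι → Set Q) : Set (ℕ → Q) :=
  {π | IsPlayFrom G q π ∧ ∀ i, InfOft π (F i)}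

/-- `Pre(L)` : the set of all finite prefixes of the (infinite) words in `L`. -/
def prefixes {Q : Type*} (L : Set (ℕ → Q)) : Set (List Q) :=
  {w | ∃ π ∈ L, ∃ k, w = (List.range k).map π}

/-- A (history dependent) system strategy: on a history ending in a system state it
produces a `δ¹`-successor of that state. -/
def IsSysStrategy {Q : Type*} (G : GameGraph Q) (f : List Q → Q) : Prop :=
  ∀ (w : List Q) (q : Q), q ∈ G.sys → f (w ++ [q]) ∈ G.delta q

/-- The finite history `π|_{[0,k]}` of a play. -/
def histUpTo {Q : Type*} (π : ℕ → Q) (k : ℕ) : List Q := (List.range (k + 1)).map π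

/-- `L_q(H,f¹)` : plays from `q` compliant with the system strategy `f¹`. -/
def Lstrat {Q : Type*} (G : GameGraph Q) (q : Q) (f : List Q → Q) : Set (ℕ → Q) :=
  {π | IsPlayFrom G q π ∧ ∀ k, π k ∈ G.sys → π (k + 1) = f (histUpTo π k)}

/-- `L_q(H,f¹)` for a memoryless system strategy `f¹ : Q → Q`. -/
def Lmem {Q : Type*} (G : GameGraph Q) (q : Q) (f : Q → Q) : Set (ℕ → Q) :=
  {π | IsPlayFrom G q π ∧ ∀ k, π k ∈ G.sys → π (k + 1) = f (π k)}

/-- Strict lexicographic order on ranks. -/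
def rankLt (p r : ℕ × ℕ) : Prop := p.1 < r.1 ∨ (p.1 = r.1 ∧ p.2 < r.2)

/-- Lexicographic order on ranks. -/
def rankLe (p r : ℕ × ℕ) : Prop := p.1 < r.1 ∨ (p.1 = r.1 ∧ p.2 ≤ r.2)

/-! ### The 4-nested fixed point `φ₄` for singleton winning conditions -/

/-- The body `(F_G ∩ Pre¹(Z)) ∪ Pre¹(Y) ∪ ((Q∖F_A) ∩ Precond(W, X∖F_A))`. -/
def body {Q : Type*} (G : GameGraph Q) (FA FG Z Y X W : Set Q) : Set Q :=
  (FG ∩ G.Pre1 Z) ∪ G.Pre1 Y ∪ (FAᶜ ∩ G.Precond W (X \ FA))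

def innerW {Q : Type*} (G : GameGraph Q) (FA FG Z Y X : Set Q) : Set Q :=
  lfpSet (fun W => body G FA FG Z Y X W)

def innerX {Q : Type*} (G : GameGraph Q) (FA FG Z Y : Set Q) : Set Q :=
  gfpSet (fun X => innerW G FA FG Z Y X)

def innerY {Q : Type*} (G : GameGraph Q) (FA FG Z : Set Q) : Set Q :=
  lfpSet (fun Y => innerX G FA FG Z Y)

/-- `⟦φ₄⟧ = Z^∞` : the value of `νZ.μY.νX.μW. (F_G ∩ Pre¹(Z)) ∪ Pre¹(Y) ∪
((Q∖F_A) ∩ Precond(W, X∖F_A))`. -/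
def phi4 {Q : Type*} (G : GameGraph Q) (FA FG : Set Q) : Set Q :=
  gfpSet (fun Z => innerY G FA FG Z)

/-- The approximants `Yⁱ` of `Y` in the terminal iteration over `Z` (`Y⁰ = ∅`). -/
def Yapprox {Q : Type*} (G : GameGraph Q) (FA FG : Set Q) : ℕ → Set Q
  | 0 => ∅
  | i + 1 => innerX G FA FG (phi4 G FA FG) (Yapprox G FA FG i)

/-- The approximants `Wⁱ_j` of `W` computed with `X = Xⁱ = Yⁱ` and `Y = Yⁱ⁻¹`. -/
def Wapprox {Q : Type*} (G : GameGraph Q) (FA FG : Set Q) (i : ℕ) : ℕ → Set Q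
  | 0 => ∅
  | j + 1 =>
      body G FA FG (phi4 G FA FG) (Yapprox G FA FG (i - 1)) (Yapprox G FA FG i)
        (Wapprox G FA FG i j)

/-- `rank(q) = (i,j)` iff `q ∈ (Yⁱ∖Yⁱ⁻¹) ∩ (Wⁱ_j∖Wⁱ_{j−1})` with `i,j > 0`. -/
def hasRank {Q : Type*} (G : GameGraph Q) (FA FG : Set Q) (q : Q) (i j : ℕ) : Prop :=
  0 < i ∧ 0 < j ∧
    q ∈ (Yapprox G FA FG i \ Yapprox G FA FG (i - 1)) ∩
        (Wapprox G FA FG i j \ Wapprox G FA FG i (j - 1))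

/-- The memoryless system strategy extracted from the ranking: `f¹(q) ∈ δ¹(q)`,
`rank(f¹(q)) < rank(q)` whenever `rank(q) > (1,1)`, and `f¹(q) ∈ Z^∞` otherwise. -/
def GoodStrategy {Q : Type*} (G : GameGraph Q) (FA FG : Set Q) (f : Q → Q) : Prop :=
  ∀ q, q ∈ G.sys → q ∈ phi4 G FA FG →
    f q ∈ G.delta q ∧
      ∀ i j, hasRank G FA FG q i j →
        (((i, j) = ((1 : ℕ), (1 : ℕ)) → f q ∈ phi4 G FA FG) ∧
          ((i, j) ≠ ((1 : ℕ), (1 : ℕ)) →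
            ∃ i' j', hasRank G FA FG (f q) i' j' ∧ rankLt (i', j') (i, j)))

/-! ### The negated fixed point `φ̄₄` (singleton conditions) -/

/-- The simplified negated body
`Pre⁰(Z̄) ∪ ((Q∖F_G) ∩ F_A ∩ Pre⁰(Ȳ)) ∪ ((Q∖F_G) ∩ Precondᶜ(W̄, X̄ ∪ F_A))`. -/
def nbody {Q : Type*} (G : GameGraph Q) (FA FG Z Y X W : Set Q) : Set Q :=
  G.Pre0 Z ∪ (FGᶜ ∩ FA ∩ G.Pre0 Y) ∪ (FGᶜ ∩ G.PrecondC W (X ∪ FA))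

/-- The simplified negated fixed point `φ̄₄ = μZ̄.νȲ.μX̄.νW̄. nbody`. -/
def phi4neg {Q : Type*} (G : GameGraph Q) (FA FG : Set Q) : Set Q :=
  lfpSet (fun Z => gfpSet (fun Y => lfpSet (fun X => gfpSet (fun W =>
    nbody G FA FG Z Y X W))))

/-- The unsimplified negation body
`((Q∖F_G) ∪ Pre⁰(Z̄)) ∩ Pre⁰(Ȳ) ∩ (F_A ∪ Precondᶜ(W̄, X̄ ∪ F_A))`. -/
def nbodyRaw {Q : Type*} (G : GameGraph Q) (FA FG Z Y X W : Set Q) : Set Q :=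
  (FGᶜ ∪ G.Pre0 Z) ∩ G.Pre0 Y ∩ (FA ∪ G.PrecondC W (X ∪ FA))

/-- The unsimplified negated fixed point. -/
def phi4negRaw {Q : Type*} (G : GameGraph Q) (FA FG : Set Q) : Set Q :=
  lfpSet (fun Z => gfpSet (fun Y => lfpSet (fun X => gfpSet (fun W =>
    nbodyRaw G FA FG Z Y X W))))

/-- The approximants `Z̄ⁱ` of the negated fixed point (`Z̄⁰ = ∅`). -/
def Zbar {Q : Type*} (G : GameGraph Q) (FA FG : Set Q) : ℕ → Set Q
  | 0 => ∅
  | i + 1 =>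
      gfpSet (fun Y => lfpSet (fun X => gfpSet (fun W =>
        nbody G FA FG (Zbar G FA FG i) Y X W)))

/-- The approximants `X̄ⁱ_j` of `X̄` computed while computing `Z̄ⁱ` (using `Ȳ = Z̄ⁱ` and
`Z̄ = Z̄ⁱ⁻¹`), with `X̄ⁱ₀ = ∅`. -/
def Xbar {Q : Type*} (G : GameGraph Q) (FA FG : Set Q) (i : ℕ) : ℕ → Set Q
  | 0 => ∅
  | j + 1 =>
      gfpSet (fun W =>
        nbody G FA FG (Zbar G FA FG (i - 1)) (Zbar G FA FG i) (Xbar G FA FG i j) W)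

/-- The negated rank: `rank(q) = (i,j)` iff `q ∈ X̄ⁱ_j ∖ X̄ⁱ_{j−1}` with `i,j > 0`. -/
def nrank {Q : Type*} (G : GameGraph Q) (FA FG : Set Q) (q : Q) (i j : ℕ) : Prop :=
  0 < i ∧ 0 < j ∧ q ∈ Xbar G FA FG i j \ Xbar G FA FG i (j - 1)

/-- Environment moves permitted during the inductive construction of the reachable
region `R_{f¹}` (cases (a'), (b'), (c'2), (c'3) and the remaining case (c'1)). -/
def envStep {Q : Type*} (G : GameGraph Q) (FA FG : Set Q) (q' q'' : Q) : Prop :=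
  q'' ∈ G.delta q' ∧
    ∃ i j, nrank G FA FG q' i j ∧
      ((q'' ∈ (phi4 G FA FG)ᶜ ∧ ∃ i' j', nrank G FA FG q'' i' j' ∧ i' ≤ i - 1) ∨
       (q' ∈ FA \ FG ∧ q'' ∈ (phi4 G FA FG)ᶜ ∧
          ∃ i' j', nrank G FA FG q'' i' j' ∧ i' ≤ i) ∨
       (q'' ∈ (phi4 G FA FG)ᶜ ∧
          ∃ i' j', nrank G FA FG q'' i' j' ∧ rankLe (i', j') (i, j - 1)) ∨
       (q'' ∈ (phi4 G FA FG)ᶜ ∧ q'' ∈ FA ∧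
          ∃ i' j', nrank G FA FG q'' i' j' ∧ rankLe (i', j') (i, j)) ∨
       (∀ p ∈ G.delta q', p ∈ (phi4 G FA FG)ᶜ ∧
          ∃ i' j', nrank G FA FG p i' j' ∧ rankLe (i', j') (i, j)))

/-- `L_q(H,f¹,R_{f¹})` : plays from `q` compliant with `f¹` that remain within the
reachable region `R_{f¹}`, i.e. in which every environment move follows the rules of
the inductive construction of `R_{f¹}`. -/
def Lrestr {Q : Type*} (G : GameGraph Q) (FA FG : Set Q) (q : Q) (f : List Q → Q) :
    Set (ℕ → Q) :=
  {π | π ∈ Lstrat G q f ∧ ∀ k, π k ∈ G.env → envStep G FA FG (π k) (π (k + 1))}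

/-! ### The vectorized fixed point `φ₄ᵛ` for general GR(1) conditions -/

/-- The body `Ω^{ab}` of the vectorized fixed point. -/
def bodyV {Q : Type*} {n m : ℕ} (G : GameGraph Q) (FAv : Fin m → Set Q)
    (FGv : Fin n → Set Q) (Zv : Fin n → Set Q) (a : Fin n) (b : Fin m)
    (Y X W : Set Q) : Set Q :=
  (FGv a ∩ G.Pre1 (Zv (modeSucc a))) ∪ G.Pre1 Y ∪ ((FAv b)ᶜ ∩ G.Precond W (X \ FAv b))

def innerWV {Q : Type*} {n m : ℕ} (G : GameGraph Q) (FAv : Fin m → Set Q)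
    (FGv : Fin n → Set Q) (Zv : Fin n → Set Q) (a : Fin n) (b : Fin m)
    (Y X : Set Q) : Set Q :=
  lfpSet (fun W => bodyV G FAv FGv Zv a b Y X W)

def innerXV {Q : Type*} {n m : ℕ} (G : GameGraph Q) (FAv : Fin m → Set Q)
    (FGv : Fin n → Set Q) (Zv : Fin n → Set Q) (a : Fin n) (b : Fin m)
    (Y : Set Q) : Set Q :=
  gfpSet (fun X => innerWV G FAv FGv Zv a b Y X)

/-- The vector `[Z¹,…,Zⁿ]` of the vectorized fixed point `φ₄ᵛ`. -/
def phi4v {Q : Type*} {n m : ℕ} (G : GameGraph Q) (FAv : Fin m → Set Q)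
    (FGv : Fin n → Set Q) : Fin n → Set Q :=
  gfpVec (fun Zv a => lfpSet (fun Y => ⋃ b, innerXV G FAv FGv Zv a b Y))

/-- `⟦φ₄ᵛ⟧ = Z^∞ = ⋃_a Zᵃ^∞`. -/
def phi4vSem {Q : Type*} {n m : ℕ} (G : GameGraph Q) (FAv : Fin m → Set Q)
    (FGv : Fin n → Set Q) : Set Q :=
  ⋃ a, phi4v G FAv FGv a

/-- The approximants `ᵃYⁱ` (with `ᵃY⁰ = ∅`) of `Yᵃ` in the terminal iteration. -/
def YapproxV {Q : Type*} {n m : ℕ} (G : GameGraph Q) (FAv : Fin m → Set Q)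
    (FGv : Fin n → Set Q) (a : Fin n) : ℕ → Set Q
  | 0 => ∅
  | i + 1 => ⋃ b, innerXV G FAv FGv (phi4v G FAv FGv) a b (YapproxV G FAv FGv a i)

/-- The fixed point `ᵃᵇXⁱ` of `X^{ab}` computed during the `i`-th iteration. -/
def XfixV {Q : Type*} {n m : ℕ} (G : GameGraph Q) (FAv : Fin m → Set Q)
    (FGv : Fin n → Set Q) (a : Fin n) (b : Fin m) (i : ℕ) : Set Q :=
  innerXV G FAv FGv (phi4v G FAv FGv) a b (YapproxV G FAv FGv a (i - 1))

/-- The approximants `ᵃᵇWⁱ_j` of `W^{ab}` computed while computing `ᵃYⁱ`. -/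
def WapproxV {Q : Type*} {n m : ℕ} (G : GameGraph Q) (FAv : Fin m → Set Q)
    (FGv : Fin n → Set Q) (a : Fin n) (b : Fin m) (i : ℕ) : ℕ → Set Q
  | 0 => ∅
  | j + 1 =>
      bodyV G FAv FGv (phi4v G FAv FGv) a b (YapproxV G FAv FGv a (i - 1))
        (XfixV G FAv FGv a b i) (WapproxV G FAv FGv a b i j)

/-- The mode-based rank: `ᵃᵇrank(q) = (i,j)` iff
`q ∈ (ᵃYⁱ∖ᵃYⁱ⁻¹) ∩ (ᵃᵇWⁱ_j∖ᵃᵇWⁱ_{j−1})` with `i,j > 0`. -/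
def hasRankV {Q : Type*} {n m : ℕ} (G : GameGraph Q) (FAv : Fin m → Set Q)
    (FGv : Fin n → Set Q) (a : Fin n) (b : Fin m) (q : Q) (i j : ℕ) : Prop :=
  0 < i ∧ 0 < j ∧
    q ∈ (YapproxV G FAv FGv a i \ YapproxV G FAv FGv a (i - 1)) ∩
        (WapproxV G FAv FGv a b i j \ WapproxV G FAv FGv a b i (j - 1))

/-- The finite-memory system strategy extracted from the mode-based ranking. -/
def GoodStrategyV {Q : Type*} {n m : ℕ} (G : GameGraph Q) (FAv : Fin m → Set Q)
    (FGv : Fin n → Set Q) (f : Q × Fin n × Fin m → Q × Fin n × Fin m) : Prop :=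
  ∀ (q : Q) (a : Fin n) (b : Fin m), q ∈ G.sys → q ∈ phi4v G FAv FGv a →
    (f (q, a, b)).1 ∈ G.delta q ∧
      ∀ i j, hasRankV G FAv FGv a b q i j →
        (((i, j) = ((1 : ℕ), (1 : ℕ)) →
            (f (q, a, b)).1 ∈ phi4v G FAv FGv (modeSucc a) ∧
              (f (q, a, b)).2.1 = modeSucc a) ∧
          (1 < i ∧ j = 1 →
            (f (q, a, b)).2.1 = a ∧
              ∃ i' j',
                hasRankV G FAv FGv a ((f (q, a, b)).2.2) ((f (q, a, b)).1) i' j' ∧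
                  i' ≤ i - 1) ∧
          (1 < j →
            (f (q, a, b)).2.1 = a ∧ (f (q, a, b)).2.2 = b ∧
              ∃ i' j',
                hasRankV G FAv FGv a b ((f (q, a, b)).1) i' j' ∧
                  rankLe (i', j') (i, j - 1)))

/-- Compliance of a play with a finite-memory strategy via mode traces `α`, `β`. -/
def CompliantModeV {Q : Type*} {n m : ℕ} (G : GameGraph Q) (FAv : Fin m → Set Q)
    (FGv : Fin n → Set Q) (f : Q × Fin n × Fin m → Q × Fin n × Fin m)
    (π : ℕ → Q) (α : ℕ → Fin n) (β : ℕ → Fin m) : Prop :=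
  ∀ k,
    (π k ∈ G.sys → (π (k + 1), α (k + 1), β (k + 1)) = f (π k, α k, β k)) ∧
      (π k ∈ G.env →
        (hasRankV G FAv FGv (α k) (β k) (π (k + 1)) 1 1 →
            α (k + 1) = modeSucc (α k)) ∧
          ((∃ i, 1 < i ∧ hasRankV G FAv FGv (α k) (β k) (π (k + 1)) i 1) →
            α (k + 1) = α k) ∧
          ((∃ i j, 1 < j ∧ hasRankV G FAv FGv (α k) (β k) (π (k + 1)) i j) →
            α (k + 1) = α k ∧ β (k + 1) = β k))

/-- `L_q(H,f¹)` for a finite-memory strategy: plays from `q` compliant with `f¹`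
for some mode traces. -/
def LmodeV {Q : Type*} {n m : ℕ} (G : GameGraph Q) (FAv : Fin m → Set Q)
    (FGv : Fin n → Set Q) (q : Q) (f : Q × Fin n × Fin m → Q × Fin n × Fin m) :
    Set (ℕ → Q) :=
  {π | IsPlayFrom G q π ∧ ∃ α β, CompliantModeV G FAv FGv f π α β}

/-- `ᵃD = F_Gᵃ ∩ Pre¹(Z^{a⁺,∞})`. -/
def DsetV {Q : Type*} {n m : ℕ} (G : GameGraph Q) (FAv : Fin m → Set Q)
    (FGv : Fin n → Set Q) (a : Fin n) : Set Q :=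
  FGv a ∩ G.Pre1 (phi4v G FAv FGv (modeSucc a))

/-- `ᵃEⁱ = Pre¹(ᵃYⁱ⁻¹) ∖ ᵃYⁱ⁻¹`. -/
def EsetV {Q : Type*} {n m : ℕ} (G : GameGraph Q) (FAv : Fin m → Set Q)
    (FGv : Fin n → Set Q) (a : Fin n) (i : ℕ) : Set Q :=
  G.Pre1 (YapproxV G FAv FGv a (i - 1)) \ YapproxV G FAv FGv a (i - 1)

/-- `ᵃᵇΘⁱ_j = (Q∖F_Aᵇ) ∩ Precond(ᵃᵇWⁱ_{j−1}, ᵃᵇXⁱ∖F_Aᵇ)`. -/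
def ThetaV {Q : Type*} {n m : ℕ} (G : GameGraph Q) (FAv : Fin m → Set Q)
    (FGv : Fin n → Set Q) (a : Fin n) (b : Fin m) (i j : ℕ) : Set Q :=
  (FAv b)ᶜ ∩ G.Precond (WapproxV G FAv FGv a b i (j - 1)) (XfixV G FAv FGv a b i \ FAv b)

/-- `ᵃᵇRⁱ_j = ᵃᵇΘⁱ_j ∖ (ᵃᵇWⁱ_{j−1} ∪ ᵃYⁱ⁻¹ ∪ ᵃEⁱ ∪ ᵃD)`. -/
def RsetV {Q : Type*} {n m : ℕ} (G : GameGraph Q) (FAv : Fin m → Set Q)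
    (FGv : Fin n → Set Q) (a : Fin n) (b : Fin m) (i j : ℕ) : Set Q :=
  ThetaV G FAv FGv a b i j \
    (WapproxV G FAv FGv a b i (j - 1) ∪ YapproxV G FAv FGv a (i - 1) ∪
      EsetV G FAv FGv a i ∪ DsetV G FAv FGv a)

/-! ### The negated vectorized fixed point -/

/-- The body of the negated vectorized fixed point. -/
def nbodyV {Q : Type*} {n m : ℕ} (G : GameGraph Q) (FAv : Fin m → Set Q)
    (FGv : Fin n → Set Q) (Zv : Fin n → Set Q) (a : Fin n) (b : Fin m)
    (Y X W : Set Q) : Set Q :=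
  G.Pre0 (Zv (modeSucc a)) ∪ ((FGv a)ᶜ ∩ FAv b ∩ G.Pre0 Y) ∪
    ((FGv a)ᶜ ∩ G.PrecondC W (X ∪ FAv b))

/-- The coordinated approximants `Z̄ᵃⁱ` of the negated vectorized fixed point. -/
def ZbarV {Q : Type*} {n m : ℕ} (G : GameGraph Q) (FAv : Fin m → Set Q)
    (FGv : Fin n → Set Q) : ℕ → Fin n → Set Q
  | 0 => fun _ => ∅
  | i + 1 => fun a =>
      gfpSet (fun Y => ⋂ b, lfpSet (fun X => gfpSet (fun W =>
        nbodyV G FAv FGv (ZbarV G FAv FGv i) a b Y X W)))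

/-- The approximants `X̄^{ab,i}_j` of `X̄^{ab}` computed during the `i`-th iteration. -/
def XbarV {Q : Type*} {n m : ℕ} (G : GameGraph Q) (FAv : Fin m → Set Q)
    (FGv : Fin n → Set Q) (a : Fin n) (b : Fin m) (i : ℕ) : ℕ → Set Q
  | 0 => ∅
  | j + 1 =>
      gfpSet (fun W =>
        nbodyV G FAv FGv (ZbarV G FAv FGv (i - 1)) a b (ZbarV G FAv FGv i a)
          (XbarV G FAv FGv a b i j) W)

/-- The negated mode-based rank: `ᵃᵇrank(q) = (i,j)` iff `q ∈ X̄^{ab,i}_j∖X̄^{ab,i}_{j−1}`. -/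
def nrankV {Q : Type*} {n m : ℕ} (G : GameGraph Q) (FAv : Fin m → Set Q)
    (FGv : Fin n → Set Q) (a : Fin n) (b : Fin m) (q : Q) (i j : ℕ) : Prop :=
  0 < i ∧ 0 < j ∧ q ∈ XbarV G FAv FGv a b i j \ XbarV G FAv FGv a b i (j - 1)

/-- Environment moves permitted during the inductive construction of `R_{f¹}`
in the vectorized setting. -/
def envStepV {Q : Type*} {n m : ℕ} (G : GameGraph Q) (FAv : Fin m → Set Q)
    (FGv : Fin n → Set Q) (q' q'' : Q) : Prop :=
  q'' ∈ G.delta q' ∧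
    ∃ (a : Fin n) (b : Fin m) (i j : ℕ), nrankV G FAv FGv a b q' i j ∧
      ((q'' ∈ (phi4vSem G FAv FGv)ᶜ ∧
          ∃ b' i' j', nrankV G FAv FGv (modeSucc a) b' q'' i' j' ∧ i' ≤ i - 1) ∨
       (q' ∈ FAv b \ FGv a ∧ q'' ∈ (phi4vSem G FAv FGv)ᶜ ∧
          ∃ b' i' j', nrankV G FAv FGv a b' q'' i' j' ∧ i' ≤ i) ∨
       (q'' ∈ (phi4vSem G FAv FGv)ᶜ ∧
          ∃ i' j', nrankV G FAv FGv a b q'' i' j' ∧ rankLe (i', j') (i, j - 1)) ∨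
       (q'' ∈ (phi4vSem G FAv FGv)ᶜ ∧ q'' ∈ FAv b ∧
          ∃ i' j', nrankV G FAv FGv a b q'' i' j' ∧ rankLe (i', j') (i, j)) ∨
       (∀ p ∈ G.delta q', p ∈ (phi4vSem G FAv FGv)ᶜ ∧
          ∃ i' j', nrankV G FAv FGv a b p i' j' ∧ rankLe (i', j') (i, j)))

/-- `L_q(H,f¹,R_{f¹})` in the vectorized setting. -/
def LrestrV {Q : Type*} {n m : ℕ} (G : GameGraph Q) (FAv : Fin m → Set Q)
    (FGv : Fin n → Set Q) (q : Q) (f : List Q → Q) : Set (ℕ → Q) :=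
  {π | π ∈ Lstrat G q f ∧ ∀ k, π k ∈ G.env → envStepV G FAv FGv (π k) (π (k + 1))}
/-! ### Auxiliary lemmas for Statement 6 -/

section AuxFix
variable {Q : Type*}

lemma lfpSet_le {F : Set Q → Set Q} {S : Set Q} (h : F S ⊆ S) : lfpSet F ⊆ S :=
  Set.sInter_subset_of_mem h

lemma le_gfpSet {F : Set Q → Set Q} {S : Set Q} (h : S ⊆ F S) : S ⊆ gfpSet F :=
  Set.subset_sUnion_of_mem h

lemma lfpSet_fixed {F : Set Q → Set Q} (hF : ∀ A B : Set Q, A ⊆ B → F A ⊆ F B) :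
    F (lfpSet F) = lfpSet F := by
  have h1 : F (lfpSet F) ⊆ lfpSet F := by
    apply Set.subset_sInter
    intro S hS
    exact (hF _ _ (lfpSet_le hS)).trans hS
  exact h1.antisymm (lfpSet_le (hF _ _ h1))

lemma gfpSet_fixed {F : Set Q → Set Q} (hF : ∀ A B : Set Q, A ⊆ B → F A ⊆ F B) :
    gfpSet F = F (gfpSet F) := by
  have h1 : gfpSet F ⊆ F (gfpSet F) := by
    apply Set.sUnion_subset
    intro S hS
    exact hS.trans (hF _ _ (le_gfpSet hS))
  exact h1.antisymm (le_gfpSet (hF _ _ h1))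

lemma lfpSet_mono {F F' : Set Q → Set Q} (h : ∀ S, F S ⊆ F' S) :
    lfpSet F ⊆ lfpSet F' := by
  apply Set.subset_sInter
  intro S hS
  exact lfpSet_le ((h S).trans hS)

lemma gfpSet_mono {F F' : Set Q → Set Q} (h : ∀ S, F S ⊆ F' S) :
    gfpSet F ⊆ gfpSet F' := by
  apply Set.sUnion_subset
  intro S hS
  exact le_gfpSet (hS.trans (h S))

lemma chain_stabilizes [Fintype Q] (S : ℕ → Set Q) (h : ∀ i, S i ⊆ S (i + 1)) :
    ∃ i, S (i + 1) = S i := by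
  by_contra hc
  push_neg at hc
  have hlt : ∀ i, (S i).ncard < (S (i + 1)).ncard := fun i =>
    Set.ncard_lt_ncard (ssubset_of_subset_of_ne (h i) (Ne.symm (hc i))) (Set.toFinite _)
  have hge : ∀ i, i ≤ (S i).ncard := by
    intro i
    induction i with
    | zero => exact Nat.zero_le _
    | succ n ih => exact Nat.lt_of_le_of_lt ih (hlt n)
  have h1 := hge (Fintype.card Q + 1)
  have h2 : (S (Fintype.card Q + 1)).ncard ≤ Fintype.card Q := by
    have := Set.ncard_le_ncard (Set.subset_univ (S (Fintype.card Q + 1))) (Set.toFinite _)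
    simpa [Set.ncard_univ, Nat.card_eq_fintype_card] using this
  omega

variable (G : GameGraph Q)

lemma PreE_mono {P P' : Set Q} (h : P ⊆ P') : G.PreE P ⊆ G.PreE P' := by
  rintro x ⟨y, hy1, hy2⟩
  exact ⟨y, hy1, h hy2⟩

lemma Pre1_mono {P P' : Set Q} (h : P ⊆ P') : G.Pre1 P ⊆ G.Pre1 P' := by
  rintro x (⟨he, hd⟩ | ⟨hs, y, hy1, hy2⟩)
  · exact Or.inl ⟨he, hd.trans h⟩
  · exact Or.inr ⟨hs, y, hy1, h hy2⟩

lemma Precond_mono {P1 P2 P1' P2' : Set Q} (h1 : P1 ⊆ P1') (h2 : P2 ⊆ P2') :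
    G.Precond P1 P2 ⊆ G.Precond P1' P2' := fun x hx =>
  ⟨PreE_mono G h1 hx.1, Pre1_mono G (Set.union_subset_union h1 h2) hx.2⟩

lemma body_mono {FA FG Z Y X W Z' Y' X' W' : Set Q}
    (hZ : Z ⊆ Z') (hY : Y ⊆ Y') (hX : X ⊆ X') (hW : W ⊆ W') :
    body G FA FG Z Y X W ⊆ body G FA FG Z' Y' X' W' := by
  unfold body
  apply Set.union_subset_union
  · apply Set.union_subset_union
    · exact Set.inter_subset_inter_right _ (Pre1_mono G hZ)
    · exact Pre1_mono G hY
  · exact Set.inter_subset_inter_right _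
      (Precond_mono G hW (Set.diff_subset_diff_left hX))

lemma innerW_mono {FA FG Z Y X Z' Y' X' : Set Q}
    (hZ : Z ⊆ Z') (hY : Y ⊆ Y') (hX : X ⊆ X') :
    innerW G FA FG Z Y X ⊆ innerW G FA FG Z' Y' X' :=
  lfpSet_mono fun W => body_mono G hZ hY hX subset_rfl

lemma innerX_mono {FA FG Z Y Z' Y' : Set Q} (hZ : Z ⊆ Z') (hY : Y ⊆ Y') :
    innerX G FA FG Z Y ⊆ innerX G FA FG Z' Y' :=
  gfpSet_mono fun X => innerW_mono G hZ hY subset_rfl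

lemma innerY_mono {FA FG Z Z' : Set Q} (hZ : Z ⊆ Z') :
    innerY G FA FG Z ⊆ innerY G FA FG Z' :=
  lfpSet_mono fun Y => innerX_mono G hZ subset_rfl

variable (FA FG : Set Q)

lemma phi4_eq_innerY : phi4 G FA FG = innerY G FA FG (phi4 G FA FG) :=
  gfpSet_fixed (fun _ _ h => innerY_mono G h)

lemma innerX_phi4_fixed :
    innerX G FA FG (phi4 G FA FG) (phi4 G FA FG) = phi4 G FA FG := by
  have h1 : phi4 G FA FG = innerY G FA FG (phi4 G FA FG) := phi4_eq_innerY G FA FG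
  have h2 : innerX G FA FG (phi4 G FA FG) (innerY G FA FG (phi4 G FA FG))
      = innerY G FA FG (phi4 G FA FG) :=
    lfpSet_fixed (fun _ _ h => innerX_mono G subset_rfl h)
  rw [← h1] at h2
  exact h2

lemma Yapprox_mono : ∀ i, Yapprox G FA FG i ⊆ Yapprox G FA FG (i + 1)
  | 0 => by intro x hx; exact hx.elim
  | i + 1 => innerX_mono G subset_rfl (Yapprox_mono i)

lemma Yapprox_le {a b : ℕ} (h : a ≤ b) : Yapprox G FA FG a ⊆ Yapprox G FA FG b := by
  induction h with
  | refl => exact subset_rfl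
  | step _ ih => exact ih.trans (Yapprox_mono G FA FG _)

lemma Yapprox_subset_phi4 : ∀ i, Yapprox G FA FG i ⊆ phi4 G FA FG
  | 0 => by intro x hx; exact hx.elim
  | i + 1 => by
    have h : innerX G FA FG (phi4 G FA FG) (Yapprox G FA FG i)
        ⊆ innerX G FA FG (phi4 G FA FG) (phi4 G FA FG) :=
      innerX_mono G subset_rfl (Yapprox_subset_phi4 i)
    rw [innerX_phi4_fixed] at h
    exact h

lemma Yapprox_succ_eq_lfp (i : ℕ) :
    Yapprox G FA FG (i + 1) =
      lfpSet (fun W => body G FA FG (phi4 G FA FG) (Yapprox G FA FG i)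
        (Yapprox G FA FG (i + 1)) W) := by
  have h : gfpSet (fun X => innerW G FA FG (phi4 G FA FG) (Yapprox G FA FG i) X)
      = innerW G FA FG (phi4 G FA FG) (Yapprox G FA FG i)
        (gfpSet (fun X => innerW G FA FG (phi4 G FA FG) (Yapprox G FA FG i) X)) :=
    gfpSet_fixed (fun _ _ h => innerW_mono G subset_rfl subset_rfl h)
  exact h

lemma Wapprox_mono (i : ℕ) : ∀ j, Wapprox G FA FG i j ⊆ Wapprox G FA FG i (j + 1)
  | 0 => by intro x hx; exact hx.elim
  | j + 1 => body_mono G subset_rfl subset_rfl subset_rfl (Wapprox_mono i j)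

lemma Wapprox_le {i a b : ℕ} (h : a ≤ b) :
    Wapprox G FA FG i a ⊆ Wapprox G FA FG i b := by
  induction h with
  | refl => exact subset_rfl
  | step _ ih => exact ih.trans (Wapprox_mono G FA FG i _)

lemma Wapprox_subset_Yapprox (i : ℕ) :
    ∀ j, Wapprox G FA FG (i + 1) j ⊆ Yapprox G FA FG (i + 1)
  | 0 => by intro x hx; exact hx.elim
  | j + 1 => by
    have hfix : body G FA FG (phi4 G FA FG) (Yapprox G FA FG i)
        (Yapprox G FA FG (i + 1)) (Yapprox G FA FG (i + 1)) = Yapprox G FA FG (i + 1) := by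
      have h := lfpSet_fixed
        (F := fun W => body G FA FG (phi4 G FA FG) (Yapprox G FA FG i)
          (Yapprox G FA FG (i + 1)) W)
        (fun _ _ h => body_mono G subset_rfl subset_rfl subset_rfl h)
      rw [← Yapprox_succ_eq_lfp] at h
      exact h
    intro x hx
    have hx' : x ∈ body G FA FG (phi4 G FA FG) (Yapprox G FA FG i)
        (Yapprox G FA FG (i + 1)) (Wapprox G FA FG (i + 1) j) := hx
    have := body_mono G (FA := FA) (FG := FG) subset_rfl subset_rfl subset_rfl
      (Wapprox_subset_Yapprox i j) hx'
    rw [hfix] at this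
    exact this

lemma exists_Yapprox [Fintype Q] {q : Q} (hq : q ∈ phi4 G FA FG) :
    ∃ i, q ∈ Yapprox G FA FG i := by
  obtain ⟨i, hi⟩ := chain_stabilizes (Yapprox G FA FG) (Yapprox_mono G FA FG)
  refine ⟨i, ?_⟩
  have hpre : innerX G FA FG (phi4 G FA FG) (Yapprox G FA FG i) ⊆ Yapprox G FA FG i := by
    have : innerX G FA FG (phi4 G FA FG) (Yapprox G FA FG i)
        = Yapprox G FA FG (i + 1) := rfl
    rw [this, hi]
  have hsub : phi4 G FA FG ⊆ Yapprox G FA FG i := by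
    rw [phi4_eq_innerY G FA FG]
    exact lfpSet_le hpre
  exact hsub hq

lemma exists_Wapprox [Fintype Q] {q : Q} {i : ℕ} (hq : q ∈ Yapprox G FA FG (i + 1)) :
    ∃ j, q ∈ Wapprox G FA FG (i + 1) j := by
  obtain ⟨j, hj⟩ := chain_stabilizes (Wapprox G FA FG (i + 1)) (Wapprox_mono G FA FG (i + 1))
  refine ⟨j, ?_⟩
  have hpre : body G FA FG (phi4 G FA FG) (Yapprox G FA FG i) (Yapprox G FA FG (i + 1))
      (Wapprox G FA FG (i + 1) j) ⊆ Wapprox G FA FG (i + 1) j := by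
    have : body G FA FG (phi4 G FA FG) (Yapprox G FA FG i) (Yapprox G FA FG (i + 1))
        (Wapprox G FA FG (i + 1) j) = Wapprox G FA FG (i + 1) (j + 1) := rfl
    rw [this, hj]
  have hsub : Yapprox G FA FG (i + 1) ⊆ Wapprox G FA FG (i + 1) j := by
    rw [Yapprox_succ_eq_lfp]
    exact lfpSet_le hpre
  exact hsub hq

end AuxFix

section AuxRank
variable {Q : Type*} {G : GameGraph Q} {FA FG : Set Q} {q q' : Q} {i j : ℕ}

lemma rank_exists [Fintype Q] (hq : q ∈ phi4 G FA FG) :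
    ∃ i j, hasRank G FA FG q i j := by
  have hY : ∃ i, q ∈ Yapprox G FA FG i := exists_Yapprox G FA FG hq
  classical
  set i0 := Nat.find hY with hi0def
  have hq0 : q ∈ Yapprox G FA FG i0 := Nat.find_spec hY
  have hipos : 0 < i0 := by
    rcases Nat.eq_zero_or_pos i0 with h | h
    · exfalso; rw [h] at hq0; exact hq0.elim
    · exact h
  have hnotY : q ∉ Yapprox G FA FG (i0 - 1) := Nat.find_min hY (by omega)
  obtain ⟨i', hi'⟩ : ∃ i', i0 = i' + 1 := ⟨i0 - 1, by omega⟩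
  have hq0' : q ∈ Yapprox G FA FG (i' + 1) := by rw [← hi']; exact hq0
  have hW : ∃ j, q ∈ Wapprox G FA FG (i' + 1) j := exists_Wapprox G FA FG hq0'
  have hW2 : ∃ j, q ∈ Wapprox G FA FG i0 j := by rw [hi']; exact hW
  set j0 := Nat.find hW2 with hj0def
  have hqW : q ∈ Wapprox G FA FG i0 j0 := Nat.find_spec hW2
  have hjpos : 0 < j0 := by
    rcases Nat.eq_zero_or_pos j0 with h | h
    · exfalso; rw [h] at hqW; exact hqW.elim
    · exact h
  have hnotW : q ∉ Wapprox G FA FG i0 (j0 - 1) := Nat.find_min hW2 (by omega)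
  exact ⟨i0, j0, hipos, hjpos, ⟨hq0, hnotY⟩, ⟨hqW, hnotW⟩⟩

lemma rank_i_le (h : hasRank G FA FG q i j) {a : ℕ} (ha : q ∈ Yapprox G FA FG a) :
    i ≤ a := by
  by_contra hc
  push_neg at hc
  exact h.2.2.1.2 (Yapprox_le G FA FG (by omega : a ≤ i - 1) ha)

lemma rank_i_eq (h : hasRank G FA FG q i j) {i' j' : ℕ}
    (h' : hasRank G FA FG q i' j') : i = i' :=
  le_antisymm (rank_i_le h h'.2.2.1.1) (rank_i_le h' h.2.2.1.1)

lemma rank_mem_phi4 (h : hasRank G FA FG q i j) : q ∈ phi4 G FA FG :=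
  Yapprox_subset_phi4 G FA FG i h.2.2.1.1

lemma rank_mem_body (h : hasRank G FA FG q i j) :
    q ∈ body G FA FG (phi4 G FA FG) (Yapprox G FA FG (i - 1)) (Yapprox G FA FG i)
      (Wapprox G FA FG i (j - 1)) := by
  have hw : q ∈ Wapprox G FA FG i j := h.2.2.2.1
  have hjpos : 0 < j := h.2.1
  obtain ⟨j', rfl⟩ : ∃ j', j = j' + 1 := ⟨j - 1, by omega⟩
  simpa [Wapprox] using hw

lemma mem_Pre1_env (hq : q ∈ G.env) {P : Set Q} (h : q ∈ G.Pre1 P) :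
    G.delta q ⊆ P := by
  rcases h with ⟨_, hd⟩ | ⟨hs, _⟩
  · exact hd
  · exact absurd hs (Set.disjoint_left.mp G.disjoint_env_sys hq)

lemma rank_one_one (h : hasRank G FA FG q 1 1) : q ∈ FG := by
  have hb := rank_mem_body h
  rcases hb with (⟨hg, _⟩ | hp) | ⟨_, hpe, _⟩
  · exact hg
  · exfalso
    rcases hp with ⟨_, hd⟩ | ⟨_, x, hx1, hx2⟩
    · obtain ⟨x, hx⟩ := G.delta_nonempty q
      exact (hd hx).elim
    · exact hx2.elim
  · exfalso
    obtain ⟨x, _, hx2⟩ := hpe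
    exact hx2.elim

lemma Pre1_Y_subset_W1 : G.Pre1 (Yapprox G FA FG (i - 1)) ⊆ Wapprox G FA FG i 1 :=
  fun x hx => Or.inl (Or.inr hx)

lemma rank_j_one_of_FA (hr : hasRank G FA FG q i j) (hFA : q ∈ FA) (hFG : q ∉ FG) :
    j = 1 := by
  have hb := rank_mem_body hr
  rcases hb with (⟨hg, _⟩ | hp) | ⟨hfa, _⟩
  · exact absurd hg hFG
  · by_contra hc
    have hj1 : 1 ≤ j - 1 := by have := hr.2.1; omega
    exact hr.2.2.2.2 (Wapprox_le G FA FG hj1 (Pre1_Y_subset_W1 hp))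
  · exact absurd hFA hfa

lemma mem_env_or_sys (G : GameGraph Q) (q : Q) : q ∈ G.env ∨ q ∈ G.sys := by
  have h : q ∈ G.env ∪ G.sys := by rw [G.union_env_sys]; trivial
  exact h

/-- Key step lemma: after `F_G` stops being visited, the first rank component
is non-increasing and strictly decreases when leaving an `F_A` state. -/
lemma step_rank [Fintype Q] {f : Q → Q} (hf : GoodStrategy G FA FG f)
    (hr : hasRank G FA FG q i j) (hq' : q' ∈ G.delta q)
    (hmove : q ∈ G.sys → q' = f q) (hFG : q ∉ FG) :
    ∃ i' j', hasRank G FA FG q' i' j' ∧ i' ≤ i ∧ (q ∈ FA → i' < i) := by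
  have hipos : 0 < i := hr.1
  rcases mem_env_or_sys G q with hqe | hqs
  · -- environment state
    have hb := rank_mem_body hr
    rcases hb with (⟨hg, _⟩ | hp) | ⟨hfa, _, hp1⟩
    · exact absurd hg hFG
    · -- all successors in Y^{i-1}
      have hd := mem_Pre1_env hqe hp
      have hq'Y : q' ∈ Yapprox G FA FG (i - 1) := hd hq'
      obtain ⟨i', j', h'⟩ := rank_exists (Yapprox_subset_phi4 G FA FG _ hq'Y)
      have hle : i' ≤ i - 1 := rank_i_le h' hq'Y
      exact ⟨i', j', h', by omega, fun _ => by omega⟩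
    · -- Precond case: successors in W^i_{j-1} ∪ (Y^i ∖ FA), q ∉ FA
      have hd := mem_Pre1_env hqe hp1
      have hq'Y : q' ∈ Yapprox G FA FG i := by
        obtain ⟨i0, rfl⟩ : ∃ i0, i = i0 + 1 := ⟨i - 1, by omega⟩
        rcases hd hq' with hw | hx
        · exact Wapprox_subset_Yapprox G FA FG i0 _ hw
        · exact hx.1
      obtain ⟨i', j', h'⟩ := rank_exists (Yapprox_subset_phi4 G FA FG _ hq'Y)
      have hle : i' ≤ i := rank_i_le h' hq'Y
      exact ⟨i', j', h', hle, fun hA => absurd hA hfa⟩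
  · -- system state
    have hq'f : q' = f q := hmove hqs
    obtain ⟨_, hstrat⟩ := hf q hqs (rank_mem_phi4 hr)
    obtain ⟨_, hne⟩ := hstrat i j hr
    by_cases h11 : i = 1 ∧ j = 1
    · exfalso
      obtain ⟨rfl, rfl⟩ := h11
      exact hFG (rank_one_one hr)
    · have hne' : (i, j) ≠ ((1 : ℕ), (1 : ℕ)) := by
        intro h
        exact h11 ⟨congrArg Prod.fst h, congrArg Prod.snd h⟩
      obtain ⟨i', j', h', hlt⟩ := hne hne'
      rw [← hq'f] at h'
      have hle : i' ≤ i := by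
        rcases hlt with h | ⟨h, _⟩ <;> omega
      refine ⟨i', j', h', hle, fun hA => ?_⟩
      have hj1 : j = 1 := rank_j_one_of_FA hr hA hFG
      rcases hlt with h | ⟨_, h⟩
      · exact h
      · exfalso
        have := h'.2.1
        omega

lemma step_phi4 [Fintype Q] {f : Q → Q} (hf : GoodStrategy G FA FG f)
    (hr : hasRank G FA FG q i j) (hq' : q' ∈ G.delta q)
    (hmove : q ∈ G.sys → q' = f q) : q' ∈ phi4 G FA FG := by
  have hipos : 0 < i := hr.1
  rcases mem_env_or_sys G q with hqe | hqs
  · have hb := rank_mem_body hr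
    rcases hb with (⟨_, hz⟩ | hp) | ⟨_, _, hp1⟩
    · exact mem_Pre1_env hqe hz hq'
    · exact Yapprox_subset_phi4 G FA FG _ (mem_Pre1_env hqe hp hq')
    · have hd := mem_Pre1_env hqe hp1
      have hq'Y : q' ∈ Yapprox G FA FG i := by
        obtain ⟨i0, rfl⟩ : ∃ i0, i = i0 + 1 := ⟨i - 1, by omega⟩
        rcases hd hq' with hw | hx
        · exact Wapprox_subset_Yapprox G FA FG i0 _ hw
        · exact hx.1
      exact Yapprox_subset_phi4 G FA FG _ hq'Y
  · have hq'f : q' = f q := hmove hqs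
    obtain ⟨_, hstrat⟩ := hf q hqs (rank_mem_phi4 hr)
    obtain ⟨h11, hne⟩ := hstrat i j hr
    by_cases hc : i = 1 ∧ j = 1
    · obtain ⟨rfl, rfl⟩ := hc
      rw [hq'f]
      exact h11 rfl
    · have hne' : (i, j) ≠ ((1 : ℕ), (1 : ℕ)) := by
        intro h
        exact hc ⟨congrArg Prod.fst h, congrArg Prod.snd h⟩
      obtain ⟨i', j', h', _⟩ := hne hne'
      rw [← hq'f] at h'
      exact rank_mem_phi4 h'

end AuxRank

/-- Lemma 3 of the paper: for all `q ∈ Z^∞`,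
`L_q(H,f¹) ⊆ L̄_q(H,F_A) ∪ L_q(H,F_G)`, i.e. every play from `q` compliant with `f¹`
that visits `F_A` infinitely often also visits `F_G` infinitely often. -/
theorem strategy_wins_gr1 {Q : Type*} [Fintype Q] (G : GameGraph Q) (FA FG : Set Q)
    (f : Q → Q) (hf : GoodStrategy G FA FG f) (q : Q) (hq : q ∈ phi4 G FA FG) :
    Lmem G q f ⊆ (LBuchi G q FA)ᶜ ∪ LBuchi G q FG := by
  intro π hπ
  obtain ⟨hplay, hcomp⟩ := hπ
  by_cases hFG : InfOft π FG
  · exact Or.inr ⟨hplay, hFG⟩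
  · left
    intro hmem
    obtain ⟨_, hFA⟩ := hmem
    -- from ¬InfOft, get N with no FG visit after N
    rw [InfOft] at hFG
    push_neg at hFG
    obtain ⟨N, hN⟩ := hFG
    have hN' : ∀ k, N ≤ k → π k ∉ FG := hN
    -- every state of the play is in phi4
    have hph : ∀ k, π k ∈ phi4 G FA FG := by
      intro k
      induction k with
      | zero => rw [hplay.1]; exact hq
      | succ n ih =>
        obtain ⟨i, j, hr⟩ := rank_exists ih
        exact step_phi4 hf hr (hplay.2 n) (hcomp n)
    -- choose ranks
    have hrk : ∀ k, ∃ i j, hasRank G FA FG (π k) i j := fun k => rank_exists (hph k)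
    classical
    choose I J hIJ using hrk
    -- the first component is non-increasing after N
    have hmono : ∀ k, N ≤ k → I (k + 1) ≤ I k := by
      intro k hk
      obtain ⟨i', j', h', hle, _⟩ :=
        step_rank hf (hIJ k) (hplay.2 k) (hcomp k) (hN' k hk)
      have heq : I (k + 1) = i' := rank_i_eq (hIJ (k + 1)) h'
      omega
    have hanti : ∀ a b, N ≤ a → a ≤ b → I b ≤ I a := by
      intro a b ha hab
      induction b, hab using Nat.le_induction with
      | base => exact le_refl _
      | succ n hn ih => exact le_trans (hmono n (le_trans ha hn)) ih
    -- the first component eventually stabilizes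
    have hSne : {n | ∃ k, N ≤ k ∧ I k = n}.Nonempty := ⟨I N, N, le_refl N, rfl⟩
    obtain ⟨k0, hk0N, hk0⟩ := Nat.sInf_mem hSne
    have hconst : ∀ k, k0 ≤ k → I k = sInf {n | ∃ k, N ≤ k ∧ I k = n} := by
      intro k hk
      refine le_antisymm ?_ (Nat.sInf_le ⟨k, le_trans hk0N hk, rfl⟩)
      rw [← hk0]
      exact hanti k0 k hk0N hk
    -- an FA visit after stabilization gives a strict decrease: contradiction
    obtain ⟨t, ht, htFA⟩ := hFA k0
    obtain ⟨i', j', h', _, hlt⟩ :=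
      step_rank hf (hIJ t) (hplay.2 t) (hcomp t) (hN' t (le_trans hk0N ht))
    have hlt' : i' < I t := hlt htFA
    have h1 : I t = sInf {n | ∃ k, N ≤ k ∧ I k = n} := hconst t ht
    have h2 : I (t + 1) = sInf {n | ∃ k, N ≤ k ∧ I k = n} := hconst (t + 1) (by omega)
    have heq : I (t + 1) = i' := rank_i_eq (hIJ (t + 1)) h'
    omega


end GR1
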